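/- Restricted disjunction property: for 𝓛 ∈ {L3, EL3⁻, EL3, EL4, EL5} and propositional formulas φ, ψ ∈ Fm₀ (containing neither □ nor K), if ⊢_𝓛 □φ ∨ □ψ then ⊢_𝓛 □φ or ⊢_𝓛 □ψ. -/

import Mathlib

/-- Formulas of the modal-epistemic language: variables, ⊥, ∧, ∨, →, □, K. -/
inductive Fm : Type
  | var : ℕ → Fm
  | bot : Fm
  | and : Fm → Fm → Fm
  | or : Fm → Fm → Fm
  | imp : Fm → Fm → Fm
  | box : Fm → Fm
  | k : Fm → Fm
  deriving DecidableEq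

namespace Fm

/-- ¬φ := φ → ⊥ -/
def neg (φ : Fm) : Fm := φ.imp .bot

/-- ⊤ := ¬⊥ -/
def top : Fm := neg .bot

/-- φ ↔ ψ := (φ→ψ) ∧ (ψ→φ) -/
def iff (φ ψ : Fm) : Fm := (φ.imp ψ).and (ψ.imp φ)

/-- Propositional identity φ ≡ ψ := □(φ→ψ) ∧ □(ψ→φ). -/
def ident (φ ψ : Fm) : Fm := ((φ.imp ψ).box).and ((ψ.imp φ).box)

/-- Substitution of `σ` for every occurrence of the variable `x`. -/
def subst (x : ℕ) (σ : Fm) : Fm → Fm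
  | var n => if n = x then σ else var n
  | bot => bot
  | and a b => and (subst x σ a) (subst x σ b)
  | or a b => or (subst x σ a) (subst x σ b)
  | imp a b => imp (subst x σ a) (subst x σ b)
  | box a => box (subst x σ a)
  | k a => k (subst x σ a)

/-- Propositional formulas (the set Fm₀): neither □ nor K occurs. -/
def IsProp : Fm → Prop
  | var _ => True
  | bot => True
  | and a b => a.IsProp ∧ b.IsProp
  | or a b => a.IsProp ∧ b.IsProp
  | imp a b => a.IsProp ∧ b.IsProp
  | box _ => False
  | k _ => False

end Fm

/-- Hilbert-style axiom schemes of intuitionistic propositional logic, with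
schematic letters ranging over all formulas of `Fm` (so the derivable formulas
are exactly the substitution instances of IPC theorems). -/
inductive IntAx : Fm → Prop
  | k (φ ψ : Fm) : IntAx (φ.imp (ψ.imp φ))
  | s (φ ψ χ : Fm) : IntAx ((φ.imp (ψ.imp χ)).imp ((φ.imp ψ).imp (φ.imp χ)))
  | andIntro (φ ψ : Fm) : IntAx (φ.imp (ψ.imp (φ.and ψ)))
  | andLeft (φ ψ : Fm) : IntAx ((φ.and ψ).imp φ)
  | andRight (φ ψ : Fm) : IntAx ((φ.and ψ).imp ψ)
  | orInl (φ ψ : Fm) : IntAx (φ.imp (φ.or ψ))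
  | orInr (φ ψ : Fm) : IntAx (ψ.imp (φ.or ψ))
  | orElim (φ ψ χ : Fm) : IntAx ((φ.imp χ).imp ((ψ.imp χ).imp ((φ.or ψ).imp χ)))
  | exfalso (φ : Fm) : IntAx (Fm.bot.imp φ)

/-- Derivability in intuitionistic propositional calculus from hypotheses `Φ`
(Hilbert style, Modus Ponens as the only rule). -/
inductive IPC (Φ : Set Fm) : Fm → Prop
  | hyp {φ} : φ ∈ Φ → IPC Φ φ
  | ax {φ} : IntAx φ → IPC Φ φ
  | mp {φ ψ} : IPC Φ (φ.imp ψ) → IPC Φ φ → IPC Φ ψ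

/-- The modal logics L3, EL3⁻ (written `EL3m`), EL3, EL4, EL5. -/
inductive ModalLogic : Type
  | L3 | EL3m | EL3 | EL4 | EL5
  deriving DecidableEq

/-- The axioms of the logic `L`:
(INT) all theorems of IPC and their substitution instances,
(A1) □(φ∨ψ)→(□φ∨□ψ), (A2) □φ→φ, (A3) □(φ→ψ)→□(□φ→□ψ);
(A7) □φ→□Kφ for the epistemic logics EL3⁻, EL3, EL4, EL5;
(A8) Kφ→¬¬φ for EL3, EL4, EL5; (A4) □φ→□□φ for EL4, EL5;
(A5) ¬□φ→□¬□φ for EL5. -/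
inductive IsAxiom : ModalLogic → Fm → Prop
  | int {L : ModalLogic} {φ : Fm} : IPC ∅ φ → IsAxiom L φ
  | a1 (L : ModalLogic) (φ ψ : Fm) :
      IsAxiom L (((φ.or ψ).box).imp ((φ.box).or (ψ.box)))
  | a2 (L : ModalLogic) (φ : Fm) : IsAxiom L ((φ.box).imp φ)
  | a3 (L : ModalLogic) (φ ψ : Fm) :
      IsAxiom L (((φ.imp ψ).box).imp (((φ.box).imp (ψ.box)).box))
  | a7 {L : ModalLogic} (φ : Fm) : L ≠ ModalLogic.L3 →
      IsAxiom L ((φ.box).imp ((φ.k).box))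
  | a8 {L : ModalLogic} (φ : Fm) :
      L = ModalLogic.EL3 ∨ L = ModalLogic.EL4 ∨ L = ModalLogic.EL5 →
      IsAxiom L ((φ.k).imp (φ.neg.neg))
  | a4 {L : ModalLogic} (φ : Fm) :
      L = ModalLogic.EL4 ∨ L = ModalLogic.EL5 →
      IsAxiom L ((φ.box).imp (φ.box.box))
  | a5 {L : ModalLogic} (φ : Fm) : L = ModalLogic.EL5 →
      IsAxiom L ((φ.box.neg).imp (φ.box.neg.box))

/-- Derivability from hypotheses `Φ` in logic `L`: hypotheses, axioms, the
theorem scheme (T) of tertium non datur, Modus Ponens, and Axiom Necessitation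
(applicable only to axioms). -/
inductive Deriv (L : ModalLogic) (Φ : Set Fm) : Fm → Prop
  | hyp {φ} : φ ∈ Φ → Deriv L Φ φ
  | ax {φ} : IsAxiom L φ → Deriv L Φ φ
  | tnd (φ : Fm) : Deriv L Φ (φ.or φ.neg)
  | mp {φ ψ} : Deriv L Φ (φ.imp ψ) → Deriv L Φ φ → Deriv L Φ ψ
  | an {φ} : IsAxiom L φ → Deriv L Φ (φ.box)

/-- ⊢_L φ : theoremhood in logic `L`. -/
def Thm (L : ModalLogic) (φ : Fm) : Prop := Deriv L ∅ φ

section Aux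

open Fm

/-- Monotonicity of IPC in the hypothesis set. -/
lemma IPC.mono {Φ Ψ : Set Fm} {φ : Fm} (h : IPC Φ φ) (hsub : Φ ⊆ Ψ) : IPC Ψ φ := by
  induction h with
  | hyp h => exact .hyp (hsub h)
  | ax h => exact .ax h
  | mp _ _ ih1 ih2 => exact .mp ih1 ih2

lemma ipc_id {Φ : Set Fm} (a : Fm) : IPC Φ (a.imp a) :=
  .mp (.mp (.ax (.s a (a.imp a) a)) (.ax (.k a (a.imp a)))) (.ax (.k a a))

lemma topI {Φ : Set Fm} : IPC Φ Fm.top := ipc_id Fm.bot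

/-- Deduction theorem for IPC. -/
lemma ipc_ded {Φ : Set Fm} {a b : Fm} (h : IPC (insert a Φ) b) : IPC Φ (a.imp b) := by
  induction h with
  | hyp h =>
    rcases Set.mem_insert_iff.mp h with rfl | h
    · exact ipc_id _
    · exact .mp (.ax (.k _ a)) (.hyp h)
  | ax h => exact .mp (.ax (.k _ a)) (.ax h)
  | mp _ _ ih1 ih2 => exact .mp (.mp (.ax (.s a _ _)) ih1) ih2

lemma impOf {Φ : Set Fm} {b : Fm} (a : Fm) (h : IPC Φ b) : IPC Φ (a.imp b) :=
  .mp (.ax (.k b a)) h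

lemma dnI {Φ : Set Fm} (a : Fm) : IPC Φ (a.imp a.neg.neg) := by
  have h : IPC (insert (a.imp Fm.bot) (insert a Φ)) Fm.bot :=
    IPC.mp (φ := a) (.hyp (by simp)) (.hyp (by simp))
  exact ipc_ded (ipc_ded h)

lemma dnIntro {Φ : Set Fm} {a : Fm} (h : IPC Φ a) : IPC Φ (a.neg.neg) :=
  .mp (dnI a) h

/-- ¬¬ of tertium non datur. -/
lemma dnTnd {Φ : Set Fm} (a : Fm) : IPC Φ (((a.or a.neg).neg).neg) := by
  have hna : IPC (insert ((a.or a.neg).imp Fm.bot) Φ) (a.imp Fm.bot) := by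
    have h : IPC (insert a (insert ((a.or a.neg).imp Fm.bot) Φ)) Fm.bot :=
      IPC.mp (φ := a.or a.neg) (.hyp (by simp))
        (.mp (.ax (.orInl a a.neg)) (.hyp (by simp)))
    exact ipc_ded h
  have hbot : IPC (insert ((a.or a.neg).imp Fm.bot) Φ) Fm.bot :=
    IPC.mp (φ := a.or a.neg) (.hyp (by simp)) (.mp (.ax (.orInr a a.neg)) hna)
  exact ipc_ded hbot

/-- ¬¬ distributes over modus ponens. -/
lemma dnMp {Φ : Set Fm} {a b : Fm} (h1 : IPC Φ ((a.imp b).neg.neg))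
    (h2 : IPC Φ (a.neg.neg)) : IPC Φ (b.neg.neg) := by
  have h1' : IPC (insert (b.imp Fm.bot) Φ) ((a.imp b).neg.neg) :=
    h1.mono (Set.subset_insert _ _)
  have h2' : IPC (insert (b.imp Fm.bot) Φ) (a.neg.neg) :=
    h2.mono (Set.subset_insert _ _)
  have na : IPC (insert (a.imp b) (insert (b.imp Fm.bot) Φ)) (a.imp Fm.bot) := by
    have h : IPC (insert a (insert (a.imp b) (insert (b.imp Fm.bot) Φ))) Fm.bot :=
      IPC.mp (φ := b) (.hyp (by simp))
        (IPC.mp (φ := a) (.hyp (by simp)) (.hyp (by simp)))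
    exact ipc_ded h
  have nab : IPC (insert (b.imp Fm.bot) Φ) ((a.imp b).imp Fm.bot) := by
    have h : IPC (insert (a.imp b) (insert (b.imp Fm.bot) Φ)) Fm.bot :=
      IPC.mp (φ := a.imp Fm.bot) (h2'.mono (Set.subset_insert _ _)) na
    exact ipc_ded h
  have hbot : IPC (insert (b.imp Fm.bot) Φ) Fm.bot :=
    IPC.mp (φ := (a.imp b).imp Fm.bot) h1' nab
  exact ipc_ded hbot

/-- Kleene slash for IPC over the empty hypothesis set. -/
def Sl : Fm → Prop
  | .var n => IPC ∅ (.var n)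
  | .bot => False
  | .and a b => Sl a ∧ Sl b
  | .or a b => Sl a ∨ Sl b
  | .imp a b => IPC ∅ (a.imp b) ∧ (Sl a → Sl b)
  | .box a => IPC ∅ a.box
  | .k a => IPC ∅ a.k

lemma sl_thm : ∀ {χ : Fm}, Sl χ → IPC ∅ χ := by
  intro χ h
  induction χ with
  | var n => exact h
  | bot => exact h.elim
  | and a b iha ihb => exact .mp (.mp (.ax (.andIntro a b)) (iha h.1)) (ihb h.2)
  | or a b iha ihb =>
    exact h.elim (fun h' => .mp (.ax (.orInl a b)) (iha h'))
      (fun h' => .mp (.ax (.orInr a b)) (ihb h'))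
  | imp a b _ _ => exact h.1
  | box a _ => exact h
  | k a _ => exact h

lemma thm_sl : ∀ {χ : Fm}, IPC ∅ χ → Sl χ := by
  intro χ h
  induction h with
  | hyp h => exact absurd h (Set.notMem_empty _)
  | mp _ _ ih1 ih2 => exact ih1.2 ih2
  | ax h =>
    cases h with
    | k φ ψ => exact ⟨.ax (.k φ ψ), fun hφ => ⟨impOf ψ (sl_thm hφ), fun _ => hφ⟩⟩
    | s φ ψ χ =>
      exact ⟨.ax (.s φ ψ χ), fun h1 =>
        ⟨.mp (.ax (.s φ ψ χ)) h1.1, fun h2 =>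
          ⟨.mp (.mp (.ax (.s φ ψ χ)) h1.1) h2.1, fun hφ => (h1.2 hφ).2 (h2.2 hφ)⟩⟩⟩
    | andIntro φ ψ =>
      exact ⟨.ax (.andIntro φ ψ), fun hφ =>
        ⟨.mp (.ax (.andIntro φ ψ)) (sl_thm hφ), fun hψ => ⟨hφ, hψ⟩⟩⟩
    | andLeft φ ψ => exact ⟨.ax (.andLeft φ ψ), fun h => h.1⟩
    | andRight φ ψ => exact ⟨.ax (.andRight φ ψ), fun h => h.2⟩
    | orInl φ ψ => exact ⟨.ax (.orInl φ ψ), fun h => Or.inl h⟩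
    | orInr φ ψ => exact ⟨.ax (.orInr φ ψ), fun h => Or.inr h⟩
    | orElim φ ψ χ =>
      exact ⟨.ax (.orElim φ ψ χ), fun h1 =>
        ⟨.mp (.ax (.orElim φ ψ χ)) h1.1, fun h2 =>
          ⟨.mp (.mp (.ax (.orElim φ ψ χ)) h1.1) h2.1, fun hor => hor.elim h1.2 h2.2⟩⟩⟩
    | exfalso φ => exact ⟨.ax (.exfalso φ), fun h => h.elim⟩

/-- Disjunction property of IPC. -/
lemma ipc_dp {a b : Fm} (h : IPC ∅ (a.or b)) : IPC ∅ a ∨ IPC ∅ b :=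
  (thm_sl h).elim (fun h' => Or.inl (sl_thm h')) (fun h' => Or.inr (sl_thm h'))

open Classical

/-- Translation of modal formulas into IPC: □χ becomes ⊤ or ⊥ according to
IPC-provability of the translation of χ; K is erased. -/
noncomputable def tr : Fm → Fm
  | .var n => .var n
  | .bot => .bot
  | .and a b => .and (tr a) (tr b)
  | .or a b => .or (tr a) (tr b)
  | .imp a b => .imp (tr a) (tr b)
  | .box a => if IPC ∅ (tr a) then Fm.top else .bot
  | .k a => tr a

lemma tr_prop : ∀ {φ : Fm}, φ.IsProp → tr φ = φ := by
  intro φ h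
  induction φ with
  | var n => simp [tr]
  | bot => simp [tr]
  | and a b iha ihb => obtain ⟨h1, h2⟩ := h; simp [tr, iha h1, ihb h2]
  | or a b iha ihb => obtain ⟨h1, h2⟩ := h; simp [tr, iha h1, ihb h2]
  | imp a b iha ihb => obtain ⟨h1, h2⟩ := h; simp [tr, iha h1, ihb h2]
  | box a _ => exact h.elim
  | k a _ => exact h.elim

lemma intAx_tr {χ : Fm} (h : IntAx χ) : IntAx (tr χ) := by
  cases h with
  | k φ ψ => simpa [tr] using IntAx.k (tr φ) (tr ψ)
  | s φ ψ χ => simpa [tr] using IntAx.s (tr φ) (tr ψ) (tr χ)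
  | andIntro φ ψ => simpa [tr] using IntAx.andIntro (tr φ) (tr ψ)
  | andLeft φ ψ => simpa [tr] using IntAx.andLeft (tr φ) (tr ψ)
  | andRight φ ψ => simpa [tr] using IntAx.andRight (tr φ) (tr ψ)
  | orInl φ ψ => simpa [tr] using IntAx.orInl (tr φ) (tr ψ)
  | orInr φ ψ => simpa [tr] using IntAx.orInr (tr φ) (tr ψ)
  | orElim φ ψ χ => simpa [tr] using IntAx.orElim (tr φ) (tr ψ) (tr χ)
  | exfalso φ => simpa [tr] using IntAx.exfalso (tr φ)

lemma ipc_tr {χ : Fm} (h : IPC ∅ χ) : IPC ∅ (tr χ) := by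
  induction h with
  | hyp h => exact absurd h (Set.notMem_empty _)
  | ax h => exact .ax (intAx_tr h)
  | mp _ _ ih1 ih2 => exact .mp ih1 ih2

/-- Every axiom of each logic translates to an IPC theorem. -/
lemma axiom_tr {L : ModalLogic} {χ : Fm} (h : IsAxiom L χ) : IPC ∅ (tr χ) := by
  cases h with
  | int h => exact ipc_tr h
  | a1 φ ψ =>
    simp only [tr]
    by_cases h : IPC ∅ ((tr φ).or (tr ψ))
    · simp only [h, ↓reduceIte]
      rcases ipc_dp h with h' | h'
      · rw [if_pos h']
        exact impOf _ (.mp (.ax (.orInl _ _)) topI)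
      · rw [if_pos h']
        exact impOf _ (.mp (.ax (.orInr _ _)) topI)
    · simp only [h, ↓reduceIte]
      exact .ax (.exfalso _)
  | a2 φ =>
    simp only [tr]
    by_cases h : IPC ∅ (tr φ)
    · rw [if_pos h]; exact impOf _ h
    · rw [if_neg h]; exact .ax (.exfalso _)
  | a3 φ ψ =>
    simp only [tr]
    by_cases h1 : IPC ∅ ((tr φ).imp (tr ψ))
    · have hin : IPC ∅ ((if IPC ∅ (tr φ) then Fm.top else Fm.bot).imp
          (if IPC ∅ (tr ψ) then Fm.top else Fm.bot)) := by
        by_cases h2 : IPC ∅ (tr φ)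
        · rw [if_pos h2, if_pos (IPC.mp h1 h2)]
          exact ipc_id _
        · rw [if_neg h2]; exact .ax (.exfalso _)
      simp only [h1, hin, ↓reduceIte]
      exact impOf _ topI
    · simp only [h1, ↓reduceIte]; exact .ax (.exfalso _)
  | a7 φ hL =>
    simp only [tr]
    exact ipc_id _
  | a8 φ hL =>
    simp only [Fm.neg, tr]
    exact dnI (tr φ)
  | a4 φ hL =>
    simp only [tr]
    by_cases h : IPC ∅ (tr φ)
    · simp only [if_pos h]
      rw [if_pos (topI (Φ := ∅))]
      exact ipc_id _
    · simp only [if_neg h]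
      exact .ax (.exfalso _)
  | a5 φ hL =>
    simp only [Fm.neg, tr]
    by_cases h : IPC ∅ (tr φ)
    · simp only [if_pos h]
      by_cases h2 : IPC ∅ (Fm.top.imp Fm.bot)
      · rw [if_pos h2]
        exact impOf _ topI
      · rw [if_neg h2]
        have hb : IPC (insert (Fm.top.imp Fm.bot) (∅ : Set Fm)) Fm.bot :=
          IPC.mp (φ := Fm.top) (.hyp (by simp)) topI
        exact ipc_ded hb
    · simp only [if_neg h]
      rw [if_pos (ipc_id Fm.bot (Φ := ∅))]
      exact impOf _ topI

/-- Soundness of the logics for the ¬¬-translation semantics. -/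
lemma deriv_sound {L : ModalLogic} {χ : Fm} (h : Deriv L ∅ χ) :
    IPC ∅ (((tr χ).neg).neg) := by
  induction h with
  | hyp h => exact absurd h (Set.notMem_empty _)
  | ax h => exact dnIntro (axiom_tr h)
  | tnd φ => exact dnTnd (tr φ)
  | mp _ _ ih1 ih2 => exact dnMp ih1 ih2
  | @an φ h =>
    have ht : tr (Fm.box φ) = Fm.top := by
      simp only [tr]
      exact if_pos (axiom_tr h)
    rw [ht]
    exact dnIntro topI

end Aux


/-- restricted disjunction property for
𝓛 ∈ {L3, EL3⁻, EL3, EL4, EL5} and propositional φ, ψ ∈ Fm₀. -/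
theorem stmt_18 (L : ModalLogic)
    (hL : L = ModalLogic.L3 ∨ L = ModalLogic.EL3m ∨ L = ModalLogic.EL3 ∨
      L = ModalLogic.EL4 ∨ L = ModalLogic.EL5)
    (φ ψ : Fm) (hφ : φ.IsProp) (hψ : ψ.IsProp)
    (h : Thm L ((φ.box).or (ψ.box))) :
    Thm L (φ.box) ∨ Thm L (ψ.box) := by
  have hs := deriv_sound h
  by_cases h1 : IPC ∅ (tr φ)
  · left
    rw [tr_prop hφ] at h1
    exact Deriv.an (IsAxiom.int h1)
  · by_cases h2 : IPC ∅ (tr ψ)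
    · right
      rw [tr_prop hψ] at h2
      exact Deriv.an (IsAxiom.int h2)
    · exfalso
      have ht : tr ((φ.box).or (ψ.box)) = Fm.bot.or Fm.bot := by
        simp only [tr]
        rw [if_neg h1, if_neg h2]
      rw [ht] at hs
      have hb : IPC ∅ ((Fm.bot.or Fm.bot).imp Fm.bot) :=
        .mp (.mp (.ax (.orElim _ _ _)) (ipc_id _)) (ipc_id _)
      have hbot : IPC ∅ Fm.bot := .mp hs hb
      exact h1 (.mp (.ax (.exfalso _)) hbot)
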